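/- Let H ≥ 0, λ > 0, 1 < p < ∞ and X₀, X₁ ∈ ℝ. Let X : [0,∞) → ℝ be a global weak solution of D_t²X + 2H·D_tX + λe^{(p−1)Ht}|X|^p = 0 with data (X₀, X₁), i.e., X and e^{(p−1)Ht}|X|^p are locally integrable on [0,∞) and for every twice continuously differentiable compactly supported function φ : [0,∞) → ℝ one has −X₁φ(0) + X₀(D_tφ)(0) − 2HX₀φ(0) + ∫₀^∞ ( X(t)·(D_t²φ)(t) − 2H·X(t)·(D_tφ)(t) + λe^{(p−1)Ht}|X(t)|^p·φ(t) ) dt = 0. If X₁ + 2HX₀ ≤ 0, then X = 0 almost everywhere on [0,∞). -/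

import Mathlib

open MeasureTheory Set Filter

noncomputable def sA12.psi (x : ℝ) : ℝ := Real.smoothTransition (2 - x)

namespace sA12

lemma psi_contDiff : ContDiff ℝ (⊤ : ℕ∞) psi :=
  Real.smoothTransition.contDiff.comp ((contDiff_const (c := (2:ℝ))).sub contDiff_id)

lemma psi_one {x : ℝ} (h : x ≤ 1) : psi x = 1 :=
  Real.smoothTransition.one_of_one_le (by linarith)

lemma psi_zero {x : ℝ} (h : 2 ≤ x) : psi x = 0 :=
  Real.smoothTransition.zero_of_nonpos (by linarith)

lemma psi_nonneg (x : ℝ) : 0 ≤ psi x := Real.smoothTransition.nonneg _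
lemma psi_le_one (x : ℝ) : psi x ≤ 1 := Real.smoothTransition.le_one _

lemma dpsi_zero_of_lt {x : ℝ} (h : x < 1) : deriv psi x = 0 := by
  have : psi =ᶠ[nhds x] fun _ => 1 :=
    Filter.eventuallyEq_of_mem (Iio_mem_nhds h) fun y hy => psi_one (le_of_lt hy)
  rw [this.deriv_eq, deriv_const]

lemma dpsi_zero_of_gt {x : ℝ} (h : 2 < x) : deriv psi x = 0 := by
  have : psi =ᶠ[nhds x] fun _ => 0 :=
    Filter.eventuallyEq_of_mem (Ioi_mem_nhds h) fun y hy => psi_zero (le_of_lt hy)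
  rw [this.deriv_eq, deriv_const]

lemma ddpsi_zero_of_lt {x : ℝ} (h : x < 1) : deriv (deriv psi) x = 0 := by
  have : deriv psi =ᶠ[nhds x] fun _ => 0 :=
    Filter.eventuallyEq_of_mem (Iio_mem_nhds h) fun y hy => dpsi_zero_of_lt hy
  rw [this.deriv_eq, deriv_const]

lemma ddpsi_zero_of_gt {x : ℝ} (h : 2 < x) : deriv (deriv psi) x = 0 := by
  have : deriv psi =ᶠ[nhds x] fun _ => 0 :=
    Filter.eventuallyEq_of_mem (Ioi_mem_nhds h) fun y hy => dpsi_zero_of_gt hy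
  rw [this.deriv_eq, deriv_const]

lemma dpsi_contDiff : ContDiff ℝ (⊤ : ℕ∞) (deriv psi) :=
  (contDiff_infty_iff_deriv.mp psi_contDiff).2

lemma ddpsi_contDiff : ContDiff ℝ (⊤ : ℕ∞) (deriv (deriv psi)) :=
  (contDiff_infty_iff_deriv.mp dpsi_contDiff).2

lemma psi_diff : Differentiable ℝ psi := psi_contDiff.differentiable (by simp)
lemma dpsi_diff : Differentiable ℝ (deriv psi) := dpsi_contDiff.differentiable (by simp)

lemma exists_M : ∃ M : ℝ, 1 ≤ M ∧ (∀ x, |deriv psi x| ≤ M) ∧ ∀ x, |deriv (deriv psi) x| ≤ M := by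
  obtain ⟨M₁, hM₁⟩ := (isCompact_Icc (a := (0:ℝ)) (b := 3)).exists_bound_of_continuousOn
    (dpsi_contDiff.continuous.continuousOn)
  obtain ⟨M₂, hM₂⟩ := (isCompact_Icc (a := (0:ℝ)) (b := 3)).exists_bound_of_continuousOn
    (ddpsi_contDiff.continuous.continuousOn)
  refine ⟨max 1 (max M₁ M₂), le_max_left _ _, fun x => ?_, fun x => ?_⟩
  · rcases le_or_gt x 1 with h | h
    · rcases lt_or_eq_of_le h with h | h
      · simp [dpsi_zero_of_lt h]
      · subst h
        calc |deriv psi 1| ≤ M₁ := hM₁ 1 (by norm_num)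
          _ ≤ _ := le_trans (le_max_left _ _) (le_max_right _ _)
    · rcases le_or_gt x 2 with h2 | h2
      · calc |deriv psi x| ≤ M₁ := hM₁ x (by constructor <;> linarith)
          _ ≤ _ := le_trans (le_max_left _ _) (le_max_right _ _)
      · simp [dpsi_zero_of_gt h2]
  · rcases le_or_gt x 1 with h | h
    · rcases lt_or_eq_of_le h with h | h
      · simp [ddpsi_zero_of_lt h]
      · subst h
        calc |deriv (deriv psi) 1| ≤ M₂ := hM₂ 1 (by norm_num)
          _ ≤ _ := le_trans (le_max_right _ _) (le_max_right _ _)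
    · rcases le_or_gt x 2 with h2 | h2
      · calc |deriv (deriv psi) x| ≤ M₂ := hM₂ x (by constructor <;> linarith)
          _ ≤ _ := le_trans (le_max_right _ _) (le_max_right _ _)
      · simp [ddpsi_zero_of_gt h2]

lemma mul_le_mul4 {a a' b b' c c' d : ℝ} (ha' : a ≤ a') (hb' : b ≤ b') (hc' : c ≤ c')
    (ha : 0 ≤ a) (hb : 0 ≤ b) (hc : 0 ≤ c) (ha2 : 0 ≤ a') (hb2 : 0 ≤ b') (hd : 0 ≤ d) :
    a * b * (c * d) ≤ a' * b' * (c' * d) := by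
  have h1 : a * b ≤ a' * b' := mul_le_mul ha' hb' hb ha2
  have h2 : a * b * c ≤ a' * b' * c' := mul_le_mul h1 hc' hc (mul_nonneg ha2 hb2)
  calc a * b * (c * d) = a * b * c * d := by ring
    _ ≤ a' * b' * c' * d := mul_le_mul_of_nonneg_right h2 hd
    _ = a' * b' * (c' * d) := by ring

end sA12

open sA12

set_option maxHeartbeats 1000000 in
/-- Nonexistence of nontrivial global weak solutions of the damped equation
`D_t²X + 2H·D_tX + λe^{(p-1)Ht}|X|^p = 0` on `[0,∞)`: if `X₁ + 2HX₀ ≤ 0`, any global weak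
solution vanishes a.e. -/
theorem stmt_12 (H lam p : ℝ) (hH : 0 ≤ H) (hlam : 0 < lam) (hp : 1 < p)
    (X₀ X₁ : ℝ) (X : ℝ → ℝ)
    (hloc : LocallyIntegrableOn X (Ici (0 : ℝ)))
    (hlocp : LocallyIntegrableOn (fun t => Real.exp ((p - 1) * H * t) * |X t| ^ p) (Ici (0 : ℝ)))
    (hweak : ∀ φ : ℝ → ℝ, ContDiff ℝ 2 φ → HasCompactSupport φ →
      -X₁ * φ 0 + X₀ * deriv φ 0 - 2 * H * X₀ * φ 0 +
        ∫ t in Ici (0 : ℝ),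
          (X t * deriv (deriv φ) t - 2 * H * X t * deriv φ t +
            lam * Real.exp ((p - 1) * H * t) * |X t| ^ p * φ t) = 0)
    (hdata : X₁ + 2 * H * X₀ ≤ 0) :
    ∀ᵐ t ∂(volume.restrict (Ici (0 : ℝ))), X t = 0 := by
  obtain ⟨M, hM1, hMd, hMdd⟩ := exists_M
  set q : ℝ := p / (p - 1) with hq_def
  have hpq : p.HolderConjugate q := Real.HolderConjugate.conjExponent hp
  have hq1 : 1 < q := hpq.symm.lt
  set m : ℕ := ⌈2 * q⌉₊ + 3 with hm_def
  have hm3 : 3 ≤ m := by omega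
  have hm2q : 2 * q ≤ (m : ℝ) := by
    calc 2 * q ≤ (⌈2 * q⌉₊ : ℝ) := Nat.le_ceil _
      _ ≤ (m : ℝ) := by exact_mod_cast Nat.le_add_right _ 3
  set E : ℝ → ℝ := fun t => Real.exp ((p - 1) * H * t) with hE_def
  have hM0 : (0:ℝ) < M := lt_of_lt_of_le one_pos hM1
  set C : ℝ := (m : ℝ) * m * M * M + (m : ℝ) * M + 2 * H * ((m : ℝ) * M) with hC_def
  have hC : 0 < C := by
    have hm0 : (0:ℝ) < (m:ℝ) := by exact_mod_cast (by omega : 0 < m)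
    positivity
  set B : ℝ := 2 * lam ^ (-(q / p)) * C ^ q with hB_def
  have hB0 : 0 ≤ B := by positivity
  have key : ∀ S R : ℝ, 0 ≤ S → 1 ≤ R → S ≤ R →
      (∫ t in Icc (0:ℝ) S, lam * E t * |X t| ^ p) ≤ B * R ^ (1 - q) := by
    intro S R hS hR hSR
    have hR0 : (0:ℝ) < R := lt_of_lt_of_le one_pos hR
    have hp0 : (0:ℝ) < p := by linarith
    have hq0 : (0:ℝ) < q := by linarith
    have hm0 : m ≠ 0 := by omega
    have hm2 : m - 2 ≠ 0 := by omega
    set φ : ℝ → ℝ := fun t => psi (t / R) ^ m * psi (-t) ^ m with hφ_def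
    set u : ℝ → ℝ := fun t => psi (t / R) ^ m with hu_def
    have hφ_eq_u : ∀ ⦃t : ℝ⦄, -1 < t → φ t = u t := by
      intro t ht
      have h1 : psi (-t) = 1 := psi_one (by linarith)
      simp only [hφ_def, hu_def, h1, one_pow, mul_one]
    have hφu_ev : ∀ ⦃t : ℝ⦄, -1 < t → φ =ᶠ[nhds t] u := fun t ht =>
      Filter.eventuallyEq_of_mem (Ioi_mem_nhds ht) fun s hs => hφ_eq_u hs
    have hψR : ContDiff ℝ (⊤:ℕ∞) fun t : ℝ => psi (t / R) :=
      psi_contDiff.comp (contDiff_id.div_const R)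
    have hψN : ContDiff ℝ (⊤:ℕ∞) fun t : ℝ => psi (-t) := psi_contDiff.comp contDiff_neg
    have hφC : ContDiff ℝ 2 φ :=
      ((hψR.pow m).mul (hψN.pow m)).of_le (by norm_cast : (2 : WithTop ℕ∞) ≤ ((⊤:ℕ∞) : WithTop ℕ∞))
    have hφsupp : HasCompactSupport φ := by
      apply HasCompactSupport.intro (isCompact_Icc (a := (-2:ℝ)) (b := 2 * R))
      intro t ht
      simp only [mem_Icc, not_and_or, not_le] at ht
      rcases ht with ht | ht
      · have h1 : psi (-t) = 0 := psi_zero (by linarith)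
        simp [hφ_def, h1, zero_pow hm0]
      · have h1 : psi (t / R) = 0 := psi_zero (by rw [le_div_iff₀ hR0]; linarith)
        simp [hφ_def, h1, zero_pow hm0]
    have hφ1 : ∀ ⦃t : ℝ⦄, -1 < t → t ≤ R → φ t = 1 := by
      intro t h1 h2
      have e1 : psi (t / R) = 1 := psi_one (by rw [div_le_one hR0]; linarith)
      have e2 : psi (-t) = 1 := psi_one (by linarith)
      simp [hφ_def, e1, e2]
    have hφ0ev : φ =ᶠ[nhds 0] fun _ => 1 := by
      refine Filter.eventuallyEq_of_mem
        (Ioo_mem_nhds (by linarith) (by linarith) : Ioo (-1:ℝ) R ∈ nhds 0) fun s hs => ?_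
      exact hφ1 hs.1 (le_of_lt hs.2)
    have hφ0 : φ 0 = 1 := hφ1 (by norm_num) (by linarith)
    have hdφ0 : deriv φ 0 = 0 := by rw [hφ0ev.deriv_eq, deriv_const]
    -- first and second derivatives of u
    set u1 : ℝ → ℝ := fun t => (m:ℝ) * psi (t / R) ^ (m - 1) * (deriv psi (t / R) * (1 / R))
      with hu1_def
    set u2 : ℝ → ℝ := fun t =>
      (m:ℝ) * (((m - 1 : ℕ):ℝ) * psi (t / R) ^ (m - 1 - 1) * (deriv psi (t / R) * (1 / R))) *
          (deriv psi (t / R) * (1 / R)) +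
        (m:ℝ) * psi (t / R) ^ (m - 1) * (deriv (deriv psi) (t / R) * (1 / R) * (1 / R))
      with hu2_def
    have hdiv : ∀ t : ℝ, HasDerivAt (fun s : ℝ => s / R) (1 / R) t := fun t =>
      (hasDerivAt_id t).div_const R
    have hψ' : ∀ t : ℝ, HasDerivAt (fun s : ℝ => psi (s / R)) (deriv psi (t / R) * (1 / R)) t :=
      fun t => ((psi_diff (t / R)).hasDerivAt).comp (h₂ := psi) t (hdiv t)
    have hdψ' : ∀ t : ℝ,
        HasDerivAt (fun s : ℝ => deriv psi (s / R)) (deriv (deriv psi) (t / R) * (1 / R)) t :=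
      fun t => ((dpsi_diff (t / R)).hasDerivAt).comp (h₂ := deriv psi) t (hdiv t)
    have hU1 : ∀ t, HasDerivAt u (u1 t) t := fun t => (hψ' t).pow m
    have hU2 : ∀ t, HasDerivAt u1 (u2 t) t := by
      intro t
      have h1 : HasDerivAt (fun s : ℝ => (m:ℝ) * psi (s / R) ^ (m - 1))
          ((m:ℝ) * (((m - 1 : ℕ):ℝ) * psi (t / R) ^ (m - 1 - 1) * (deriv psi (t / R) * (1 / R)))) t :=
        ((hψ' t).pow (m - 1)).const_mul (m:ℝ)
      have h2 : HasDerivAt (fun s : ℝ => deriv psi (s / R) * (1 / R))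
          (deriv (deriv psi) (t / R) * (1 / R) * (1 / R)) t := (hdψ' t).mul_const (1 / R)
      have h3 := h1.mul h2
      convert h3 using 1
      all_goals rfl
    have hderiv_u : deriv u = u1 := funext fun t => (hU1 t).deriv
    have hφd : ∀ ⦃t : ℝ⦄, -1 < t → deriv φ t = u1 t := fun t ht =>
      ((hφu_ev ht).deriv_eq).trans ((hU1 t).deriv)
    have hφdd : ∀ ⦃t : ℝ⦄, -1 < t → deriv (deriv φ) t = u2 t := by
      intro t ht
      rw [((hφu_ev ht).deriv).deriv_eq, hderiv_u, (hU2 t).deriv]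
    -- bounds
    have hpow_le : ∀ x : ℝ, psi x ^ (m - 1) ≤ psi x ^ (m - 2) := fun x =>
      pow_le_pow_of_le_one (psi_nonneg x) (psi_le_one x) (by omega)
    have hpow_nn : ∀ (x : ℝ) (k : ℕ), (0:ℝ) ≤ psi x ^ k := fun x k =>
      pow_nonneg (psi_nonneg x) k
    set G : ℝ → ℝ := fun t => u2 t - 2 * H * u1 t with hG_def
    have habs_u1 : ∀ t, |u1 t| ≤ (m:ℝ) * M * psi (t / R) ^ (m - 2) / R := by
      intro t
      have : |u1 t| = (m:ℝ) * psi (t / R) ^ (m - 1) * (|deriv psi (t / R)| * (1 / R)) := by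
        rw [hu1_def, abs_mul, abs_mul, abs_mul,
          abs_of_nonneg (by positivity : (0:ℝ) ≤ (m:ℝ)),
          abs_of_nonneg (hpow_nn _ _), abs_of_nonneg (by positivity : (0:ℝ) ≤ 1 / R)]
      rw [this]
      calc (m:ℝ) * psi (t / R) ^ (m - 1) * (|deriv psi (t / R)| * (1 / R))
          ≤ (m:ℝ) * psi (t / R) ^ (m - 2) * (M * (1 / R)) :=
            mul_le_mul4 le_rfl (hpow_le _) (hMd _) (by positivity) (hpow_nn _ _)
              (abs_nonneg _) (by positivity) (hpow_nn _ _) (by positivity)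
        _ = (m:ℝ) * M * psi (t / R) ^ (m - 2) / R := by ring
    have habs_u2 : ∀ t, |u2 t| ≤
        ((m:ℝ) * m * M * M + (m:ℝ) * M) * psi (t / R) ^ (m - 2) / (R * R) := by
      intro t
      have hmm : ((m - 1 : ℕ):ℝ) ≤ (m:ℝ) := by exact_mod_cast Nat.sub_le m 1
      have e12 : m - 1 - 1 = m - 2 := by omega
      calc |u2 t| ≤
          |(m:ℝ) * (((m - 1 : ℕ):ℝ) * psi (t / R) ^ (m - 1 - 1) * (deriv psi (t / R) * (1 / R))) *
            (deriv psi (t / R) * (1 / R))| +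
          |(m:ℝ) * psi (t / R) ^ (m - 1) * (deriv (deriv psi) (t / R) * (1 / R) * (1 / R))| :=
            abs_add_le _ _
        _ ≤ ((m:ℝ) * m * M * M) * psi (t / R) ^ (m - 2) / (R * R) +
            ((m:ℝ) * M) * psi (t / R) ^ (m - 2) / (R * R) := by
          apply add_le_add
          · rw [abs_mul, abs_mul, abs_mul, abs_mul, abs_mul,
              abs_of_nonneg (by positivity : (0:ℝ) ≤ (m:ℝ)),
              abs_of_nonneg (by exact_mod_cast Nat.zero_le _ : (0:ℝ) ≤ ((m - 1 : ℕ):ℝ)),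
              abs_of_nonneg (hpow_nn _ _), abs_of_nonneg (by positivity : (0:ℝ) ≤ 1 / R), e12]
            have hinner : ((m - 1 : ℕ):ℝ) * psi (t / R) ^ (m - 2) * (|deriv psi (t / R)| * (1 / R))
                ≤ ((m:ℝ)) * psi (t / R) ^ (m - 2) * (M * (1 / R)) :=
              mul_le_mul4 hmm le_rfl (hMd _) (by positivity) (hpow_nn _ _) (abs_nonneg _)
                (by positivity) (hpow_nn _ _) (by positivity)
            calc (m:ℝ) * (((m - 1 : ℕ):ℝ) * psi (t / R) ^ (m - 2) * (|deriv psi (t / R)| * (1 / R))) *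
                  (|deriv psi (t / R)| * (1 / R))
                ≤ (m:ℝ) * (((m:ℝ)) * psi (t / R) ^ (m - 2) * (M * (1 / R))) * (M * (1 / R)) :=
                  mul_le_mul4 le_rfl hinner (hMd _) (by positivity)
                    (mul_nonneg (mul_nonneg (by positivity) (hpow_nn _ _))
                      (mul_nonneg (abs_nonneg _) (by positivity)))
                    (abs_nonneg _) (by positivity)
                    (mul_nonneg (mul_nonneg (by positivity) (hpow_nn _ _))
                      (mul_nonneg (by positivity : (0:ℝ) ≤ M) (by positivity)))
                    (by positivity)
              _ = ((m:ℝ) * m * M * M) * psi (t / R) ^ (m - 2) / (R * R) := by ring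
          · rw [abs_mul, abs_mul, abs_mul, abs_mul,
              abs_of_nonneg (by positivity : (0:ℝ) ≤ (m:ℝ)),
              abs_of_nonneg (hpow_nn _ _), abs_of_nonneg (by positivity : (0:ℝ) ≤ 1 / R)]
            have hcc : |deriv (deriv psi) (t / R)| * (1 / R) ≤ M * (1 / R) :=
              mul_le_mul_of_nonneg_right (hMdd _) (by positivity)
            calc (m:ℝ) * psi (t / R) ^ (m - 1) * (|deriv (deriv psi) (t / R)| * (1 / R) * (1 / R))
                ≤ (m:ℝ) * psi (t / R) ^ (m - 2) * (M * (1 / R) * (1 / R)) :=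
                  mul_le_mul4 le_rfl (hpow_le _) hcc (by positivity) (hpow_nn _ _)
                    (by positivity) (by positivity) (hpow_nn _ _) (by positivity)
              _ = ((m:ℝ) * M) * psi (t / R) ^ (m - 2) / (R * R) := by ring
        _ = ((m:ℝ) * m * M * M + (m:ℝ) * M) * psi (t / R) ^ (m - 2) / (R * R) := by ring
    have hG_bound : ∀ t, |G t| ≤ C * psi (t / R) ^ (m - 2) / R := by
      intro t
      have h1 := habs_u1 t
      have h2 := habs_u2 t
      have hRR : (m:ℝ) * m * M * M + (m:ℝ) * M ≥ 0 := by positivity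
      have hps := hpow_nn (t / R) (m - 2)
      have hstep : ((m:ℝ) * m * M * M + (m:ℝ) * M) * psi (t / R) ^ (m - 2) / (R * R) ≤
          ((m:ℝ) * m * M * M + (m:ℝ) * M) * psi (t / R) ^ (m - 2) / R := by
        apply div_le_div_of_nonneg_left (by positivity) hR0
        nlinarith
      calc |G t| ≤ |u2 t| + 2 * H * |u1 t| := by
            rw [hG_def]
            have := abs_sub (u2 t) (2 * H * u1 t)
            calc |u2 t - 2 * H * u1 t| ≤ |u2 t| + |2 * H * u1 t| := abs_sub _ _
              _ = |u2 t| + 2 * H * |u1 t| := by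
                rw [abs_mul, abs_of_nonneg (by positivity : (0:ℝ) ≤ 2 * H)]
        _ ≤ ((m:ℝ) * m * M * M + (m:ℝ) * M) * psi (t / R) ^ (m - 2) / R +
            2 * H * ((m:ℝ) * M * psi (t / R) ^ (m - 2) / R) := by
            refine add_le_add (le_trans h2 hstep) ?_
            exact mul_le_mul_of_nonneg_left h1 (by positivity)
        _ = C * psi (t / R) ^ (m - 2) / R := by rw [hC_def]; ring
    -- part 2
    have hφ01 : ∀ t, 0 ≤ φ t ∧ φ t ≤ 1 := by
      intro t
      refine ⟨mul_nonneg (hpow_nn _ _) (hpow_nn _ _), ?_⟩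
      calc φ t ≤ 1 * 1 := mul_le_mul (pow_le_one₀ (psi_nonneg _) (psi_le_one _))
            (pow_le_one₀ (psi_nonneg _) (psi_le_one _)) (hpow_nn _ _) zero_le_one
        _ = 1 := one_mul 1
    have hψ_zero_far : ∀ ⦃t : ℝ⦄, 2 * R < t → psi (t / R) = 0 := fun t ht =>
      psi_zero (by rw [le_div_iff₀ hR0]; linarith)
    have hφ_zero_far : ∀ ⦃t : ℝ⦄, 2 * R < t → φ t = 0 := by
      intro t ht
      simp [hφ_def, hψ_zero_far ht, zero_pow hm0]
    have hG_zero_far : ∀ ⦃t : ℝ⦄, 2 * R < t → G t = 0 := by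
      intro t ht
      have h1 := hG_bound t
      rw [hψ_zero_far ht, zero_pow hm2] at h1
      have h2 : |G t| ≤ 0 := by simpa using h1
      exact abs_eq_zero.mp (le_antisymm h2 (abs_nonneg _))
    have hG_glob : ∀ t, |G t| ≤ C / R := by
      intro t
      refine le_trans (hG_bound t) ?_
      have h1 : psi (t / R) ^ (m - 2) ≤ 1 := pow_le_one₀ (psi_nonneg _) (psi_le_one _)
      calc C * psi (t / R) ^ (m - 2) / R = (C / R) * psi (t / R) ^ (m - 2) := by ring
        _ ≤ (C / R) * 1 := mul_le_mul_of_nonneg_left h1 (le_of_lt (div_pos hC hR0))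
        _ = C / R := mul_one _
    set F1 : ℝ → ℝ := fun t => lam * E t * |X t| ^ p * φ t with hF1_def
    set F2 : ℝ → ℝ := fun t => X t * G t with hF2_def
    have hF1nn : ∀ s, 0 ≤ F1 s := fun s =>
      mul_nonneg (mul_nonneg (mul_nonneg hlam.le (Real.exp_pos _).le)
        (Real.rpow_nonneg (abs_nonneg _) _)) (hφ01 s).1
    -- continuity
    have hψc := psi_contDiff.continuous
    have hdψc := dpsi_contDiff.continuous
    have hddψc := ddpsi_contDiff.continuous
    have c1 : Continuous fun t : ℝ => psi (t / R) := hψc.comp (continuous_id.div_const R)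
    have c2 : Continuous fun t : ℝ => deriv psi (t / R) := hdψc.comp (continuous_id.div_const R)
    have c3 : Continuous fun t : ℝ => deriv (deriv psi) (t / R) :=
      hddψc.comp (continuous_id.div_const R)
    have hu1c : Continuous u1 := (continuous_const.mul (c1.pow (m - 1))).mul
      (c2.mul continuous_const)
    have hu2c : Continuous u2 :=
      ((continuous_const.mul ((continuous_const.mul (c1.pow (m - 1 - 1))).mul
        (c2.mul continuous_const))).mul (c2.mul continuous_const)).add
        ((continuous_const.mul (c1.pow (m - 1))).mul ((c3.mul continuous_const).mul
          continuous_const))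
    have hGcont : Continuous G := hu2c.sub (continuous_const.mul hu1c)
    have hφcont : Continuous φ := (c1.pow m).mul ((hψc.comp continuous_neg).pow m)
    -- integrability of F1
    have hbase : IntegrableOn (fun t => E t * |X t| ^ p) (Icc (0:ℝ) (2 * R)) :=
      hlocp.integrableOn_compact_subset Icc_subset_Ici_self isCompact_Icc
    have hF1int : IntegrableOn F1 (Ici (0:ℝ)) := by
      have h1 : IntegrableOn (fun t => (lam * φ t) * (E t * |X t| ^ p)) (Icc (0:ℝ) (2 * R)) := by
        refine hbase.bdd_mul ((continuous_const.mul hφcont).aestronglyMeasurable) (c := lam) (Filter.Eventually.of_forall fun t => ?_)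
        rw [Real.norm_eq_abs, abs_mul, abs_of_nonneg hlam.le, abs_of_nonneg (hφ01 t).1]
        calc lam * φ t ≤ lam * 1 := mul_le_mul_of_nonneg_left (hφ01 t).2 hlam.le
          _ = lam := mul_one lam
      have h1' : IntegrableOn F1 (Icc (0:ℝ) (2 * R)) :=
        h1.congr (Filter.Eventually.of_forall fun t => by simp only [hF1_def]; ring)
      have h2 : IntegrableOn F1 (Ioi (2 * R)) := by
        have hz : EqOn (fun _ : ℝ => (0:ℝ)) F1 (Ioi (2 * R)) := fun t ht => by
          simp [hF1_def, hφ_zero_far ht]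
        exact (integrableOn_zero).congr_fun hz measurableSet_Ioi
      refine (h1'.union h2).mono_set fun t ht => ?_
      rcases le_or_gt t (2 * R) with h | h
      · exact Or.inl ⟨ht, h⟩
      · exact Or.inr h
    -- integrability of F2
    have hXloc : IntegrableOn X (Icc (0:ℝ) (2 * R)) :=
      hloc.integrableOn_compact_subset Icc_subset_Ici_self isCompact_Icc
    have hF2int : IntegrableOn F2 (Ici (0:ℝ)) := by
      have h1 : IntegrableOn (fun t => G t * X t) (Icc (0:ℝ) (2 * R)) :=
        hXloc.bdd_mul hGcont.aestronglyMeasurable (c := C / R) (Filter.Eventually.of_forall fun t => by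
          rw [Real.norm_eq_abs]; exact hG_glob t)
      have h1' : IntegrableOn F2 (Icc (0:ℝ) (2 * R)) :=
        h1.congr (Filter.Eventually.of_forall fun t => by simp only [hF2_def]; ring)
      have h2 : IntegrableOn F2 (Ioi (2 * R)) := by
        have hz : EqOn (fun _ : ℝ => (0:ℝ)) F2 (Ioi (2 * R)) := fun t ht => by
          simp [hF2_def, hG_zero_far ht]
        exact (integrableOn_zero).congr_fun hz measurableSet_Ioi
      refine (h1'.union h2).mono_set fun t ht => ?_
      rcases le_or_gt t (2 * R) with h | h
      · exact Or.inl ⟨ht, h⟩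
      · exact Or.inr h
    -- apply the weak formulation
    have hw := hweak φ hφC hφsupp
    rw [hφ0, hdφ0] at hw
    have hcong : EqOn (fun t => X t * deriv (deriv φ) t - 2 * H * X t * deriv φ t +
        lam * Real.exp ((p - 1) * H * t) * |X t| ^ p * φ t) (fun t => F2 t + F1 t)
        (Ici (0:ℝ)) := by
      intro t ht
      have ht0 : (0:ℝ) ≤ t := ht
      have h1 : deriv φ t = u1 t := hφd (by linarith)
      have h2 : deriv (deriv φ) t = u2 t := hφdd (by linarith)
      simp only [hF2_def, hF1_def, hG_def, hE_def]
      rw [h1, h2]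
      ring
    rw [setIntegral_congr_fun measurableSet_Ici hcong, integral_add hF2int hF1int] at hw
    have hIF1_le_negF2 : (∫ t in Ici (0:ℝ), F1 t) ≤ -(∫ t in Ici (0:ℝ), F2 t) := by
      linarith [hw, hdata]
    -- Young's inequality pointwise
    set D : ℝ := lam ^ (-(q / p)) * C ^ q * R ^ (-q) / q with hD_def
    have hD0 : 0 ≤ D := by
      refine div_nonneg (mul_nonneg (mul_nonneg ?_ ?_) ?_) hq0.le
      · exact Real.rpow_nonneg hlam.le _
      · exact Real.rpow_nonneg hC.le _
      · exact Real.rpow_nonneg hR0.le _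
    have hpne : p ≠ 0 := ne_of_gt hp0
    have hp1ne : p - 1 ≠ 0 := by intro h; rw [sub_eq_zero] at h; exact absurd h.symm (ne_of_lt hp)
    have hqp : q / p = q - 1 := by rw [hq_def]; field_simp; ring
    have hpoint : ∀ t ∈ Ici (0:ℝ), |F2 t| ≤ (1 / p) * F1 t +
        (Icc (0:ℝ) (2 * R)).indicator (fun _ => D) t := by
      intro t ht
      have ht0 : (0:ℝ) ≤ t := ht
      have hψn1 : psi (-t) = 1 := psi_one (by linarith)
      have hφt : φ t = psi (t / R) ^ m := by simp [hφ_def, hψn1]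
      have hind_nn : 0 ≤ (Icc (0:ℝ) (2 * R)).indicator (fun _ => D) t :=
        indicator_nonneg (fun _ _ => hD0) t
      rcases (psi_nonneg (t / R)).lt_or_eq with hpos | h0
      · -- positive case
        have ht2R : t ≤ 2 * R := by
          by_contra hcon
          push_neg at hcon
          rw [hψ_zero_far hcon] at hpos
          exact lt_irrefl 0 hpos
        set A : ℝ := lam * E t * psi (t / R) ^ m with hA_def
        have hA : 0 < A := mul_pos (mul_pos hlam (Real.exp_pos _)) (pow_pos hpos m)
        have hy := Real.young_inequality_of_nonneg
          (a := A ^ (1 / p) * |X t|) (b := A ^ (-(1 / p)) * |G t|)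
          (mul_nonneg (Real.rpow_nonneg hA.le _) (abs_nonneg _))
          (mul_nonneg (Real.rpow_nonneg hA.le _) (abs_nonneg _)) hpq
        have hab : (A ^ (1 / p) * |X t|) * (A ^ (-(1 / p)) * |G t|) = |F2 t| := by
          have h1 : A ^ (1 / p) * A ^ (-(1 / p)) = 1 := by
            rw [← Real.rpow_add hA]
            norm_num
          calc (A ^ (1 / p) * |X t|) * (A ^ (-(1 / p)) * |G t|)
              = (A ^ (1 / p) * A ^ (-(1 / p))) * (|X t| * |G t|) := by ring
            _ = |X t| * |G t| := by rw [h1, one_mul]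
            _ = |X t * G t| := (abs_mul _ _).symm
            _ = |F2 t| := rfl
        have hap : (A ^ (1 / p) * |X t|) ^ p = A * |X t| ^ p := by
          rw [Real.mul_rpow (Real.rpow_nonneg hA.le _) (abs_nonneg _),
            ← Real.rpow_mul hA.le, one_div_mul_cancel (ne_of_gt hp0), Real.rpow_one]
        have hA_F1 : A * |X t| ^ p = F1 t := by
          simp only [hA_def, hF1_def, hφt, hE_def]
          ring
        have hGq : |G t| ^ q ≤ (C * psi (t / R) ^ (m - 2) / R) ^ q :=
          Real.rpow_le_rpow (abs_nonneg _) (hG_bound t) hq0.le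
        have hbq : (A ^ (-(1 / p)) * |G t|) ^ q ≤ lam ^ (-(q / p)) * C ^ q * R ^ (-q) := by
          have e1 : (A ^ (-(1 / p)) * |G t|) ^ q = (A ^ (-(1 / p))) ^ q * |G t| ^ q :=
            Real.mul_rpow (Real.rpow_nonneg hA.le _) (abs_nonneg _)
          have e2 : (A ^ (-(1 / p))) ^ q = A ^ (-(q / p)) := by
            rw [← Real.rpow_mul hA.le]
            congr 1
            ring
          have e3 : A ^ (-(q / p)) =
              lam ^ (-(q / p)) * (E t) ^ (-(q / p)) * (psi (t / R) ^ m) ^ (-(q / p)) := by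
            rw [hA_def, Real.mul_rpow (mul_nonneg hlam.le (Real.exp_pos _).le)
              (pow_nonneg (psi_nonneg _) m), Real.mul_rpow hlam.le (Real.exp_pos _).le]
          have e4 : (C * psi (t / R) ^ (m - 2) / R) ^ q =
              C ^ q * (psi (t / R) ^ (m - 2)) ^ q * R ^ (-q) := by
            rw [div_eq_mul_inv, Real.mul_rpow (mul_nonneg hC.le (hpow_nn _ _))
              (inv_nonneg.mpr hR0.le), Real.mul_rpow hC.le (hpow_nn _ _),
              Real.inv_rpow hR0.le, ← Real.rpow_neg hR0.le]
          have hps_pow : (psi (t / R) ^ m) ^ (-(q / p)) * (psi (t / R) ^ (m - 2)) ^ q ≤ 1 := by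
            have hmc : ((m - 2 : ℕ) : ℝ) = (m : ℝ) - 2 := by
              have h2m : (2:ℕ) ≤ m := by omega
              push_cast [Nat.cast_sub h2m]
              ring
            rw [← Real.rpow_natCast (psi (t / R)) m, ← Real.rpow_natCast (psi (t / R)) (m - 2),
              ← Real.rpow_mul (psi_nonneg _), ← Real.rpow_mul (psi_nonneg _),
              ← Real.rpow_add hpos, hmc]
            apply Real.rpow_le_one (psi_nonneg _) (psi_le_one _)
            have e5 : (m : ℝ) * (-(q / p)) + ((m : ℝ) - 2) * q = (m : ℝ) - 2 * q := by
              rw [hqp]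
              ring
            rw [e5]
            linarith [hm2q]
          have hE1 : (E t) ^ (-(q / p)) ≤ 1 := by
            have h5 : 0 ≤ (p - 1) * H * t :=
              mul_nonneg (mul_nonneg (by linarith) hH) ht0
            have h6 : 0 < q / p := div_pos hq0 hp0
            simp only [hE_def]
            rw [← Real.exp_mul]
            apply Real.exp_le_one_iff.mpr
            nlinarith
          calc (A ^ (-(1 / p)) * |G t|) ^ q = A ^ (-(q / p)) * |G t| ^ q := by rw [e1, e2]
            _ ≤ A ^ (-(q / p)) * (C * psi (t / R) ^ (m - 2) / R) ^ q :=
                mul_le_mul_of_nonneg_left hGq (Real.rpow_nonneg hA.le _)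
            _ = (lam ^ (-(q / p)) * ((E t) ^ (-(q / p)) *
                ((psi (t / R) ^ m) ^ (-(q / p)) * (psi (t / R) ^ (m - 2)) ^ q))) *
                (C ^ q * R ^ (-q)) := by rw [e3, e4]; ring
            _ ≤ (lam ^ (-(q / p)) * (1 * 1)) * (C ^ q * R ^ (-q)) := by
                refine mul_le_mul_of_nonneg_right ?_
                  (mul_nonneg (Real.rpow_nonneg hC.le _) (Real.rpow_nonneg hR0.le _))
                refine mul_le_mul_of_nonneg_left ?_ (Real.rpow_nonneg hlam.le _)
                refine mul_le_mul hE1 hps_pow ?_ zero_le_one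
                exact mul_nonneg (Real.rpow_nonneg (pow_nonneg (psi_nonneg _) _) _)
                  (Real.rpow_nonneg (hpow_nn _ _) _)
            _ = lam ^ (-(q / p)) * C ^ q * R ^ (-q) := by ring
        have hindic : (Icc (0:ℝ) (2 * R)).indicator (fun _ => D) t = D :=
          indicator_of_mem (mem_Icc.mpr ⟨ht0, ht2R⟩) _
        rw [hindic]
        calc |F2 t| = (A ^ (1 / p) * |X t|) * (A ^ (-(1 / p)) * |G t|) := hab.symm
          _ ≤ (A ^ (1 / p) * |X t|) ^ p / p + (A ^ (-(1 / p)) * |G t|) ^ q / q := hy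
          _ ≤ F1 t / p + (lam ^ (-(q / p)) * C ^ q * R ^ (-q)) / q := by
              refine add_le_add (le_of_eq ?_) ?_
              · rw [hap, hA_F1]
              · exact (div_le_div_iff_of_pos_right hq0).mpr hbq
          _ = (1 / p) * F1 t + D := by rw [hD_def]; ring
      · -- psi = 0 case
        have hGt : G t = 0 := by
          have h1 := hG_bound t
          rw [← h0, zero_pow hm2] at h1
          have h2 : |G t| ≤ 0 := by simpa using h1
          exact abs_eq_zero.mp (le_antisymm h2 (abs_nonneg _))
        have : F2 t = 0 := by simp [hF2_def, hGt]
        rw [this, abs_zero]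
        exact add_nonneg (mul_nonneg (by positivity) (hF1nn t)) hind_nn
    -- integrate the pointwise bound
    have hind_int : Integrable ((Icc (0:ℝ) (2 * R)).indicator (fun _ => D))
        (volume.restrict (Ici (0:ℝ))) := by
      rw [integrable_indicator_iff measurableSet_Icc]
      refine (integrableOn_const_iff (C := D)).mpr (Or.inr ?_)
      exact lt_of_le_of_lt (Measure.restrict_apply_le _ _) measure_Icc_lt_top
    have hmaj_int : Integrable (fun t => (1 / p) * F1 t +
        (Icc (0:ℝ) (2 * R)).indicator (fun _ => D) t) (volume.restrict (Ici (0:ℝ))) :=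
      (hF1int.const_mul (1 / p)).add hind_int
    have hIabs : (∫ t in Ici (0:ℝ), |F2 t|) ≤
        (1 / p) * (∫ t in Ici (0:ℝ), F1 t) + D * (2 * R) := by
      have h1 : (∫ t in Ici (0:ℝ), |F2 t|) ≤ ∫ t in Ici (0:ℝ),
          ((1 / p) * F1 t + (Icc (0:ℝ) (2 * R)).indicator (fun _ => D) t) :=
        setIntegral_mono_on hF2int.abs hmaj_int measurableSet_Ici hpoint
      have h2 : (∫ t in Ici (0:ℝ), (Icc (0:ℝ) (2 * R)).indicator (fun _ => D) t)
          = D * (2 * R) := by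
        rw [integral_indicator_const _ measurableSet_Icc,
          measureReal_restrict_apply measurableSet_Icc, measureReal_def,
          inter_eq_left.mpr (Icc_subset_Ici_self), Real.volume_Icc, smul_eq_mul,
          ENNReal.toReal_ofReal (by linarith : (0:ℝ) ≤ 2 * R - 0)]
        ring
      rw [integral_add (hF1int.const_mul (1 / p)) hind_int, integral_const_mul, h2] at h1
      exact h1
    have hIF2 : -(∫ t in Ici (0:ℝ), F2 t) ≤
        (1 / p) * (∫ t in Ici (0:ℝ), F1 t) + D * (2 * R) := by
      refine le_trans ?_ hIabs
      calc -(∫ t in Ici (0:ℝ), F2 t) ≤ |∫ t in Ici (0:ℝ), F2 t| := neg_le_abs _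
        _ ≤ ∫ t in Ici (0:ℝ), |F2 t| := by
            have h3 := norm_integral_le_integral_norm (μ := volume.restrict (Ici (0:ℝ))) F2
            simpa [Real.norm_eq_abs] using h3
    have hI : (∫ t in Ici (0:ℝ), F1 t) ≤ B * R ^ (1 - q) := by
      have h1 : (∫ t in Ici (0:ℝ), F1 t) ≤
          (1 / p) * (∫ t in Ici (0:ℝ), F1 t) + D * (2 * R) := le_trans hIF1_le_negF2 hIF2
      have hfrac : 1 - 1 / p = 1 / q := by
        rw [hq_def]
        rw [one_div_div]
        field_simp
      have e : (∫ t in Ici (0:ℝ), F1 t) / q = (1 - 1 / p) * (∫ t in Ici (0:ℝ), F1 t) := by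
        rw [hfrac]
        ring
      have h2 : (∫ t in Ici (0:ℝ), F1 t) / q ≤ D * (2 * R) := by
        rw [e]
        linarith
      have h3 : (∫ t in Ici (0:ℝ), F1 t) ≤ D * (2 * R) * q := (div_le_iff₀ hq0).mp h2
      have hRq : R ^ (-q) * R = R ^ (1 - q) := by
        nth_rewrite 2 [← Real.rpow_one R]
        rw [← Real.rpow_add hR0]
        congr 1
        ring
      have hfin : D * (2 * R) * q = B * R ^ (1 - q) := by
        rw [hD_def, hB_def, ← hRq]
        field_simp
      linarith
    -- conclude
    have hcong2 : EqOn (fun t => lam * E t * |X t| ^ p) F1 (Icc (0:ℝ) S) := by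
      intro t ht
      have h1 : φ t = 1 := hφ1 (by linarith [ht.1]) (le_trans ht.2 hSR)
      simp only [hF1_def, h1, mul_one]
    rw [setIntegral_congr_fun measurableSet_Icc hcong2]
    refine le_trans (setIntegral_mono_set hF1int (Filter.Eventually.of_forall hF1nn)
      (HasSubset.Subset.eventuallyLE Icc_subset_Ici_self)) hI


  -- final part
  have hInt_n : ∀ n : ℕ, IntegrableOn (fun t => lam * E t * |X t| ^ p) (Icc (0:ℝ) n) := by
    intro n
    have h1 : IntegrableOn (fun t => E t * |X t| ^ p) (Icc (0:ℝ) n) :=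
      hlocp.integrableOn_compact_subset Icc_subset_Ici_self isCompact_Icc
    exact (h1.const_mul lam).congr (Filter.Eventually.of_forall fun t => by ring)
  have hzero : ∀ n : ℕ, ∀ᵐ t ∂volume.restrict (Icc (0:ℝ) n), X t = 0 := by
    intro n
    have hle : ∀ R : ℝ, max (n:ℝ) 1 ≤ R →
        (∫ t in Icc (0:ℝ) n, lam * E t * |X t| ^ p) ≤ B * R ^ (1 - q) := fun R hR =>
      key n R n.cast_nonneg (le_trans (le_max_right _ _) hR) (le_trans (le_max_left _ _) hR)
    have htend : Tendsto (fun R : ℝ => B * R ^ (1 - q)) atTop (nhds 0) := by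
      have h := (tendsto_rpow_neg_atTop (y := q - 1) (by linarith)).const_mul B
      simpa [show ∀ x:ℝ, -(q-1) = 1-q from fun _ => by ring] using h
    have h0 : (∫ t in Icc (0:ℝ) n, lam * E t * |X t| ^ p) ≤ 0 :=
      ge_of_tendsto htend (eventually_atTop.2 ⟨max (n:ℝ) 1, hle⟩)
    have h0' : (∫ t in Icc (0:ℝ) n, lam * E t * |X t| ^ p) = 0 :=
      le_antisymm h0 (setIntegral_nonneg measurableSet_Icc fun t _ => by positivity)
    have hae := (integral_eq_zero_iff_of_nonneg (f := fun t => lam * E t * |X t| ^ p)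
      (fun t => by positivity) (hInt_n n)).mp h0'
    filter_upwards [hae] with t ht
    have hE : (0:ℝ) < E t := Real.exp_pos _
    have hxp : |X t| ^ p = 0 :=
      (mul_eq_zero.mp ht).resolve_left (by positivity)
    have := (Real.rpow_eq_zero_iff_of_nonneg (abs_nonneg _)).mp hxp
    exact abs_eq_zero.mp this.1
  have hU : Ici (0:ℝ) = ⋃ n : ℕ, Icc (0:ℝ) n := by
    ext x
    simp only [mem_Ici, mem_iUnion, mem_Icc]
    constructor
    · intro hx
      obtain ⟨n, hn⟩ := exists_nat_ge x
      exact ⟨n, hx, hn⟩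
    · rintro ⟨n, h, _⟩
      exact h
  rw [hU]
  exact (ae_restrict_iUnion_iff _ _).2 hzero
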